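/- Assume condition (A) holds, and let H be a spanning subgraph of Q_X satisfying: (i) any two vertices lying in a common small cube belong to the same connected component of H; and (ii) for every small cube S with S ∩ C ≠ ∅ and every x ∈ X, there is an edge of H joining a vertex of S to a vertex of the translated small cube S + b(x). Then for every f ∈ 𝔽₂^{U*}, any two vertices of T_f belong to the same connected component of H. -/

import Mathlib

/-- The hypercube graph on vertex set `𝔽₂^X`. -/
def hypercube (X : Type*) [Fintype X] [DecidableEq X] : SimpleGraph (X → ZMod 2) where
  Adj u v := hammingDist u v = 1
  symm := ⟨fun u v h => by rwa [hammingDist_comm]⟩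
  loopless := ⟨fun u h => by simp [hammingDist_self] at h⟩

noncomputable def phiLin {k : ℕ} (X : Finset (Fin k → ZMod 2)) :
    ({x // x ∈ X} → ZMod 2) →ₗ[ZMod 2] (Fin k → ZMod 2) where
  toFun u := ∑ x : {x // x ∈ X}, u x • (x : Fin k → ZMod 2)
  map_add' u v := by simp [add_smul, Finset.sum_add_distrib]
  map_smul' c u := by simp [smul_smul, Finset.smul_sum]

lemma phiLin_apply {k : ℕ} (X : Finset (Fin k → ZMod 2)) (u : {x // x ∈ X} → ZMod 2) :
    phiLin X u = ∑ x : {x // x ∈ X}, u x • (x : Fin k → ZMod 2) := rfl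

lemma phiLin_single {k : ℕ} (X : Finset (Fin k → ZMod 2)) (x : {x // x ∈ X}) :
    phiLin X (Pi.single x 1) = (x : Fin k → ZMod 2) := by
  classical
  rw [phiLin_apply]
  have h : ∀ y : {x // x ∈ X}, (Pi.single x 1 : {x // x ∈ X} → ZMod 2) y • (y : Fin k → ZMod 2)
      = if y = x then (x : Fin k → ZMod 2) else 0 := by
    intro y
    by_cases hy : y = x
    · subst hy; simp
    · simp [Pi.single_apply, hy]
  rw [Finset.sum_congr rfl (fun y _ => h y), Finset.sum_ite_eq' Finset.univ x,
    if_pos (Finset.mem_univ x)]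

open scoped Classical in
theorem statement11 (k d : ℕ) (hk : 1 ≤ k)
    (X : Finset (Fin k → ZMod 2)) (hX0 : (0 : Fin k → ZMod 2) ∉ X)
    (hXcard : X.card = d)
    (D : Finset (Fin k → ZMod 2)) (hDX : D ⊆ X)
    (W : Submodule (ZMod 2) (Fin k → ZMod 2))
    (hW : W = Submodule.span (ZMod 2) (D : Set (Fin k → ZMod 2)))
    (spanB : Submodule (ZMod 2) ({x // x ∈ X} → ZMod 2))
    (hspanB : spanB = Submodule.span (ZMod 2)
      {v | ∃ x : {x // x ∈ X}, (x : Fin k → ZMod 2) ∈ D ∧ v = Pi.single x (1 : ZMod 2)})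
    (C : Set ({x // x ∈ X} → ZMod 2))
    (hC : C = {u | ∑ x : {x // x ∈ X}, u x • (x : Fin k → ZMod 2) = 0})
    (hA : ∀ t : (Fin k → ZMod 2) ⧸ W, t ≠ 0 →
      ∃ x ∈ X, (Submodule.Quotient.mk x : (Fin k → ZMod 2) ⧸ W) = t)
    (H : SimpleGraph ({x // x ∈ X} → ZMod 2))
    (hHsub : H ≤ hypercube {x // x ∈ X})
    (hi : ∀ u v : {x // x ∈ X} → ZMod 2, u - v ∈ spanB → H.Reachable u v)
    (hii : ∀ S : Set ({x // x ∈ X} → ZMod 2), (∃ u₀, S = {v | v - u₀ ∈ spanB}) →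
      (S ∩ C).Nonempty → ∀ x : {x // x ∈ X},
        ∃ u ∈ S, ∃ w ∈ S, H.Adj u (w + Pi.single x 1)) :
    ∀ f : {t : (Fin k → ZMod 2) ⧸ W // t ≠ 0} → ZMod 2,
      ∀ u ∈ {u : {x // x ∈ X} → ZMod 2 |
          ∀ t : {t : (Fin k → ZMod 2) ⧸ W // t ≠ 0},
            (∑ x : {x // x ∈ X},
              if (Submodule.Quotient.mk (x : Fin k → ZMod 2) : (Fin k → ZMod 2) ⧸ W)
                  = (t : (Fin k → ZMod 2) ⧸ W)
              then u x else 0) = f t},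
        ∀ v ∈ {u : {x // x ∈ X} → ZMod 2 |
          ∀ t : {t : (Fin k → ZMod 2) ⧸ W // t ≠ 0},
            (∑ x : {x // x ∈ X},
              if (Submodule.Quotient.mk (x : Fin k → ZMod 2) : (Fin k → ZMod 2) ⧸ W)
                  = (t : (Fin k → ZMod 2) ⧸ W)
              then u x else 0) = f t},
          H.Reachable u v := by
  intro f u hu v hv
  -- notation
  set ψ : ({x // x ∈ X} → ZMod 2) →ₗ[ZMod 2] (Fin k → ZMod 2) ⧸ W :=
    W.mkQ ∘ₗ phiLin X with hψ
  -- char 2 facts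
  have hchar : ∀ a : ZMod 2, a + a = 0 := by decide
  have hone : ∀ a : ZMod 2, a ≠ 0 → a = 1 := by decide
  have hQchar : ∀ t : (Fin k → ZMod 2) ⧸ W, t + t = 0 := by
    intro t
    have h2 : (2 : ZMod 2) • t = t + t := two_smul (ZMod 2) t
    rw [show (2 : ZMod 2) = 0 by decide, zero_smul] at h2
    exact h2.symm
  have hpsingle : ∀ x : {x // x ∈ X},
      (Pi.single x 1 : ({x // x ∈ X} → ZMod 2)) + Pi.single x 1 = 0 := by
    intro x; funext z; exact hchar _
  -- cross lemma : from ψ = 0 cubes we can cross in any direction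
  have cross : ∀ w : ({x // x ∈ X} → ZMod 2), ψ w = 0 → ∀ x : {x // x ∈ X},
      H.Reachable w (w + Pi.single x 1) := by
    intro w hw x
    have hφ : phiLin X w ∈ W := by
      have : W.mkQ (phiLin X w) = 0 := hw
      rwa [Submodule.mkQ_apply, Submodule.Quotient.mk_eq_zero] at this
    have hle : W ≤ Submodule.map (phiLin X) spanB := by
      rw [hW]
      apply Submodule.span_le.mpr
      intro dd hdd
      have hdX : dd ∈ X := hDX hdd
      refine ⟨Pi.single ⟨dd, hdX⟩ 1, ?_, ?_⟩
      · rw [hspanB]; exact Submodule.subset_span ⟨⟨dd, hdX⟩, hdd, rfl⟩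
      · exact phiLin_single X ⟨dd, hdX⟩
    obtain ⟨e, he, hfe⟩ := hle hφ
    have hwC : (w - e) ∈ C := by
      rw [hC]
      show (w - e) ∈ {u : ({x // x ∈ X} → ZMod 2) | ∑ x : {x // x ∈ X}, u x • (x : Fin k → ZMod 2) = 0}
      have : phiLin X (w - e) = 0 := by rw [map_sub, hfe, sub_self]
      simpa [phiLin_apply] using this
    have hSC : (({v | v - w ∈ spanB} : Set ({x // x ∈ X} → ZMod 2)) ∩ C).Nonempty := by
      refine ⟨w - e, ?_, hwC⟩
      show (w - e) - w ∈ spanB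
      have : (w - e) - w = -e := by abel
      rw [this]; exact spanB.neg_mem he
    obtain ⟨a, ha, b, hb, hadj⟩ := hii {v | v - w ∈ spanB} ⟨w, rfl⟩ hSC x
    have r1 : H.Reachable w a := by
      apply hi
      have : w - a = -(a - w) := by abel
      rw [this]; exact spanB.neg_mem ha
    have r3 : H.Reachable (b + Pi.single x 1) (w + Pi.single x 1) := by
      apply hi
      have : (b + Pi.single x 1) - (w + Pi.single x 1) = b - w := by abel
      rw [this]; exact hb
    exact (r1.trans hadj.reachable).trans r3
  -- ψ of a single-flip
  have hψadd : ∀ (w : ({x // x ∈ X} → ZMod 2)) (x : {x // x ∈ X}),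
      ψ (w + Pi.single x 1) = ψ w + Submodule.Quotient.mk (x : Fin k → ZMod 2) := by
    intro w x
    rw [map_add]
    congr 1
    show W.mkQ (phiLin X (Pi.single x 1)) = _
    rw [phiLin_single, Submodule.mkQ_apply]
  -- cross from cubes at level mk x, in direction x
  have cross' : ∀ (w : ({x // x ∈ X} → ZMod 2)) (x : {x // x ∈ X}),
      ψ w = Submodule.Quotient.mk (x : Fin k → ZMod 2) →
      H.Reachable w (w + Pi.single x 1) := by
    intro w x hwx
    have h0 : ψ (w + Pi.single x 1) = 0 := by rw [hψadd, hwx]; exact hQchar _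
    have hr := cross _ h0 x
    have heq : (w + Pi.single x 1) + Pi.single x 1 = w := by
      rw [add_assoc, hpsingle, add_zero]
    rw [heq] at hr
    exact hr.symm
  -- sum helpers
  have hsum_add : ∀ (a b : ({x // x ∈ X} → ZMod 2)) (t : (Fin k → ZMod 2) ⧸ W),
      (∑ z : {x // x ∈ X},
        if (Submodule.Quotient.mk (z : Fin k → ZMod 2) : (Fin k → ZMod 2) ⧸ W) = t then (a + b) z else 0)
      = (∑ z : {x // x ∈ X},
          if (Submodule.Quotient.mk (z : Fin k → ZMod 2) : (Fin k → ZMod 2) ⧸ W) = t then a z else 0)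
        + (∑ z : {x // x ∈ X},
          if (Submodule.Quotient.mk (z : Fin k → ZMod 2) : (Fin k → ZMod 2) ⧸ W) = t then b z else 0) := by
    intro a b t
    rw [← Finset.sum_add_distrib]
    apply Finset.sum_congr rfl
    intro z _
    by_cases h : (Submodule.Quotient.mk (z : Fin k → ZMod 2) : (Fin k → ZMod 2) ⧸ W) = t <;> simp [h]
  have hsum_single : ∀ (x : {x // x ∈ X}) (t : (Fin k → ZMod 2) ⧸ W),
      (∑ z : {x // x ∈ X},
        if (Submodule.Quotient.mk (z : Fin k → ZMod 2) : (Fin k → ZMod 2) ⧸ W) = t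
        then (Pi.single x 1 : ({x // x ∈ X} → ZMod 2)) z else 0)
      = if (Submodule.Quotient.mk (x : Fin k → ZMod 2) : (Fin k → ZMod 2) ⧸ W) = t then 1 else 0 := by
    intro x t
    have h : ∀ z : {x // x ∈ X},
        (if (Submodule.Quotient.mk (z : Fin k → ZMod 2) : (Fin k → ZMod 2) ⧸ W) = t
          then (Pi.single x 1 : ({x // x ∈ X} → ZMod 2)) z else 0)
        = if z = x then (if (Submodule.Quotient.mk (x : Fin k → ZMod 2) : (Fin k → ZMod 2) ⧸ W) = t then 1 else 0)
          else 0 := by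
      intro z
      by_cases hz : z = x
      · subst hz; simp
      · simp [Pi.single_apply, hz]
    rw [Finset.sum_congr rfl (fun z _ => h z), Finset.sum_ite_eq' Finset.univ x,
      if_pos (Finset.mem_univ x)]
  -- the main engine: flipping coordinates of wd while staying connected
  have engine : ∀ n : ℕ, ∀ wd : {x // x ∈ X} → ZMod 2,
      (Finset.univ.filter (fun z => wd z ≠ 0)).card ≤ n →
      (∀ t : (Fin k → ZMod 2) ⧸ W, t ≠ 0 →
        (∑ z : {x // x ∈ X},
          if (Submodule.Quotient.mk (z : Fin k → ZMod 2) : (Fin k → ZMod 2) ⧸ W) = t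
          then wd z else 0) = 0) →
      ∀ w : {x // x ∈ X} → ZMod 2, ψ w = 0 → H.Reachable w (w + wd) := by
    intro n
    induction n with
    | zero =>
      intro wd hcard hsum w hw
      have hwd : wd = 0 := by
        funext y
        show wd y = 0
        by_contra hy
        have hmem : y ∈ Finset.univ.filter (fun z => wd z ≠ 0) := by simp [hy]
        have := Finset.card_pos.mpr ⟨y, hmem⟩
        omega
      rw [hwd, add_zero]
    | succ n ih =>
      intro wd hcard hsum w hw
      by_cases hz : ∀ y, wd y = 0
      · rw [show wd = 0 from funext hz, add_zero]
      push_neg at hz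
      obtain ⟨x, hx⟩ := hz
      have hxmem : x ∈ Finset.univ.filter (fun z => wd z ≠ 0) := by simp [hx]
      by_cases ht : (Submodule.Quotient.mk (x : Fin k → ZMod 2) : (Fin k → ZMod 2) ⧸ W) = 0
      · -- class-zero coordinate: flip it alone
        have r1 : H.Reachable w (w + Pi.single x 1) := cross w hw x
        have hψ1 : ψ (w + Pi.single x 1) = 0 := by rw [hψadd, hw, ht, add_zero]
        set wd1 : {x // x ∈ X} → ZMod 2 := wd + Pi.single x 1 with hwd1
        have hval : ∀ z, wd1 z = if z = x then 0 else wd z := by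
          intro z
          by_cases hzx : z = x
          · subst hzx
            show wd z + (Pi.single z 1 : {x // x ∈ X} → ZMod 2) z = _
            rw [if_pos rfl, Pi.single_eq_same, hone _ hx]
            decide
          · show wd z + (Pi.single x 1 : {x // x ∈ X} → ZMod 2) z = _
            rw [if_neg hzx, Pi.single_eq_of_ne hzx, add_zero]
        have hsub : Finset.univ.filter (fun z => wd1 z ≠ 0) ⊆
            (Finset.univ.filter (fun z => wd z ≠ 0)).erase x := by
          intro z hzm
          simp only [Finset.mem_filter, Finset.mem_univ, true_and] at hzm
          rw [hval z] at hzm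
          by_cases hzx : z = x
          · rw [if_pos hzx] at hzm; exact absurd rfl hzm
          · rw [if_neg hzx] at hzm
            exact Finset.mem_erase.mpr ⟨hzx, by simp [hzm]⟩
        have hcard' : (Finset.univ.filter (fun z => wd1 z ≠ 0)).card ≤ n := by
          have h1 := Finset.card_le_card hsub
          have h2 := Finset.card_erase_of_mem hxmem
          omega
        have hsum' : ∀ t : (Fin k → ZMod 2) ⧸ W, t ≠ 0 →
            (∑ z : {x // x ∈ X},
              if (Submodule.Quotient.mk (z : Fin k → ZMod 2) : (Fin k → ZMod 2) ⧸ W) = t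
              then wd1 z else 0) = 0 := by
          intro t htne
          rw [hsum_add, hsum_single, hsum t htne, if_neg, add_zero]
          rw [ht]
          exact fun h => htne h.symm
        have r2 := ih wd1 hcard' hsum' (w + Pi.single x 1) hψ1
        have heq : (w + Pi.single x 1) + wd1 = w + wd := by
          funext z
          show (w z + _) + (wd z + _) = w z + wd z
          have key : ∀ a b c : ZMod 2, (a + c) + (b + c) = a + b := by decide
          exact key _ _ _
        rw [heq] at r2
        exact r1.trans r2
      · -- nonzero class: find a partner y and flip the pair
        have hexy : ∃ y, y ≠ x ∧
            (Submodule.Quotient.mk (y : Fin k → ZMod 2) : (Fin k → ZMod 2) ⧸ W)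
              = Submodule.Quotient.mk (x : Fin k → ZMod 2) ∧ wd y ≠ 0 := by
          by_contra hno
          push_neg at hno
          have hsx := hsum _ ht
          rw [Finset.sum_eq_single x ?h1 ?h2] at hsx
          · rw [if_pos rfl] at hsx; exact hx hsx
          case h1 =>
            intro b _ hbx
            by_cases hmk : (Submodule.Quotient.mk (b : Fin k → ZMod 2) : (Fin k → ZMod 2) ⧸ W)
                = Submodule.Quotient.mk (x : Fin k → ZMod 2)
            · rw [if_pos hmk, hno b hbx hmk]
            · rw [if_neg hmk]
          case h2 =>
            intro hxm; exact absurd (Finset.mem_univ x) hxm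
        obtain ⟨y, hyx, hymk, hy⟩ := hexy
        have r1 : H.Reachable w (w + Pi.single x 1) := cross w hw x
        have hψ1 : ψ (w + Pi.single x 1)
            = Submodule.Quotient.mk (y : Fin k → ZMod 2) := by
          rw [hψadd, hw, zero_add, hymk]
        have r2 : H.Reachable (w + Pi.single x 1) (w + Pi.single x 1 + Pi.single y 1) :=
          cross' _ y hψ1
        have hψ2 : ψ (w + Pi.single x 1 + Pi.single y 1) = 0 := by
          rw [hψadd, hψ1]; exact hQchar _
        set wd2 : {x // x ∈ X} → ZMod 2 := wd + Pi.single x 1 + Pi.single y 1 with hwd2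
        have hval : ∀ z, wd2 z
            = if z = x then 0 else if z = y then 0 else wd z := by
          intro z
          show (wd z + (Pi.single x 1 : {x // x ∈ X} → ZMod 2) z)
              + (Pi.single y 1 : {x // x ∈ X} → ZMod 2) z = _
          by_cases hzx : z = x
          · subst hzx
            rw [if_pos rfl, Pi.single_eq_same, Pi.single_eq_of_ne (fun h => hyx h.symm),
              add_zero, hone _ hx]
            decide
          · rw [if_neg hzx, Pi.single_eq_of_ne hzx, add_zero]
            by_cases hzy : z = y
            · subst hzy
              rw [if_pos rfl, Pi.single_eq_same, hone _ hy]
              decide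
            · rw [if_neg hzy, Pi.single_eq_of_ne hzy, add_zero]
        have hsub : Finset.univ.filter (fun z => wd2 z ≠ 0) ⊆
            (Finset.univ.filter (fun z => wd z ≠ 0)).erase x := by
          intro z hzm
          simp only [Finset.mem_filter, Finset.mem_univ, true_and] at hzm
          rw [hval z] at hzm
          by_cases hzx : z = x
          · rw [if_pos hzx] at hzm; exact absurd rfl hzm
          · rw [if_neg hzx] at hzm
            by_cases hzy : z = y
            · rw [if_pos hzy] at hzm; exact absurd rfl hzm
            · rw [if_neg hzy] at hzm
              exact Finset.mem_erase.mpr ⟨hzx, by simp [hzm]⟩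
        have hcard' :
            (Finset.univ.filter (fun z => wd2 z ≠ 0)).card
              ≤ n := by
          have h1 := Finset.card_le_card hsub
          have h2 := Finset.card_erase_of_mem hxmem
          omega
        have hsum' : ∀ t : (Fin k → ZMod 2) ⧸ W, t ≠ 0 →
            (∑ z : {x // x ∈ X},
              if (Submodule.Quotient.mk (z : Fin k → ZMod 2) : (Fin k → ZMod 2) ⧸ W) = t
              then wd2 z else 0) = 0 := by
          intro t htne
          rw [hsum_add, hsum_add, hsum_single, hsum_single, hsum t htne, zero_add, hymk]
          by_cases hmk : (Submodule.Quotient.mk (x : Fin k → ZMod 2) : (Fin k → ZMod 2) ⧸ W) = t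
          · rw [if_pos hmk]; decide
          · rw [if_neg hmk, add_zero]
        have r3 := ih wd2 hcard' hsum'
          (w + Pi.single x 1 + Pi.single y 1) hψ2
        have heq : (w + Pi.single x 1 + Pi.single y 1)
            + wd2 = w + wd := by
          funext z
          show ((w z + _) + _) + ((wd z + _) + _) = w z + wd z
          have key : ∀ a b c dd : ZMod 2, ((a + c) + dd) + ((b + c) + dd) = a + b := by decide
          exact key _ _ _ _
        rw [heq] at r3
        exact (r1.trans r2).trans r3
  -- ψ is determined by f on T_f
  haveI : Fintype ((Fin k → ZMod 2) ⧸ W) := Fintype.ofFinite _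
  have hpsi : ∀ uu : {x // x ∈ X} → ZMod 2,
      (∀ t : {t : (Fin k → ZMod 2) ⧸ W // t ≠ 0},
        (∑ x : {x // x ∈ X},
          if (Submodule.Quotient.mk (x : Fin k → ZMod 2) : (Fin k → ZMod 2) ⧸ W)
              = (t : (Fin k → ZMod 2) ⧸ W)
          then uu x else 0) = f t) →
      ψ uu = ∑ t : (Fin k → ZMod 2) ⧸ W, (if h : t = 0 then 0 else f ⟨t, h⟩ • t) := by
    intro uu huu
    have h1 : ψ uu = ∑ x : {x // x ∈ X},
        uu x • (Submodule.Quotient.mk (x : Fin k → ZMod 2) : (Fin k → ZMod 2) ⧸ W) := by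
      show W.mkQ (phiLin X uu) = _
      rw [phiLin_apply, map_sum]
      exact Finset.sum_congr rfl fun x _ => by rw [map_smul, Submodule.mkQ_apply]
    rw [h1, ← Finset.sum_fiberwise Finset.univ
        (fun x : {x // x ∈ X} =>
          (Submodule.Quotient.mk (x : Fin k → ZMod 2) : (Fin k → ZMod 2) ⧸ W))
        (fun x => uu x •
          (Submodule.Quotient.mk (x : Fin k → ZMod 2) : (Fin k → ZMod 2) ⧸ W))]
    apply Finset.sum_congr rfl
    intro t _
    by_cases ht : t = 0
    · subst ht
      rw [dif_pos rfl]
      apply Finset.sum_eq_zero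
      intro x hxm
      rw [Finset.mem_filter] at hxm
      rw [hxm.2, smul_zero]
    · rw [dif_neg ht]
      have hterm : ∀ x ∈ Finset.univ.filter (fun x : {x // x ∈ X} =>
          (Submodule.Quotient.mk (x : Fin k → ZMod 2) : (Fin k → ZMod 2) ⧸ W) = t),
          uu x • (Submodule.Quotient.mk (x : Fin k → ZMod 2) : (Fin k → ZMod 2) ⧸ W)
            = uu x • t := fun x hxm => by rw [(Finset.mem_filter.mp hxm).2]
      rw [Finset.sum_congr rfl hterm, ← Finset.sum_smul, Finset.sum_filter]
      congr 1
      exact huu ⟨t, ht⟩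
  -- final assembly
  have hs : ψ u = ψ v := by rw [hpsi u hu, hpsi v hv]
  have hwdsum : ∀ t : (Fin k → ZMod 2) ⧸ W, t ≠ 0 →
      (∑ z : {x // x ∈ X},
        if (Submodule.Quotient.mk (z : Fin k → ZMod 2) : (Fin k → ZMod 2) ⧸ W) = t
        then (u + v) z else 0) = 0 := by
    intro t htne
    rw [hsum_add, hu ⟨t, htne⟩, hv ⟨t, htne⟩, hchar]
  by_cases hψu : ψ u = 0
  · have r := engine _ (u + v) le_rfl hwdsum u hψu
    have heq : u + (u + v) = v := by
      funext z
      show u z + (u z + v z) = v z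
      have key : ∀ a b : ZMod 2, a + (a + b) = b := by decide
      exact key _ _
    rwa [heq] at r
  · obtain ⟨x₀, hx₀X, hx₀⟩ := hA (ψ u) hψu
    have r1 : H.Reachable u (u + Pi.single (⟨x₀, hx₀X⟩ : {x // x ∈ X}) 1) :=
      cross' u ⟨x₀, hx₀X⟩ hx₀.symm
    have r2 : H.Reachable v (v + Pi.single (⟨x₀, hx₀X⟩ : {x // x ∈ X}) 1) :=
      cross' v ⟨x₀, hx₀X⟩ (by rw [← hs]; exact hx₀.symm)
    have hψ1 : ψ (u + Pi.single (⟨x₀, hx₀X⟩ : {x // x ∈ X}) 1) = 0 := by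
      rw [hψadd, ← hx₀]
      exact hQchar _
    have r3 := engine _ (u + v) le_rfl hwdsum
      (u + Pi.single (⟨x₀, hx₀X⟩ : {x // x ∈ X}) 1) hψ1
    have heq : (u + Pi.single (⟨x₀, hx₀X⟩ : {x // x ∈ X}) 1) + (u + v)
        = v + Pi.single (⟨x₀, hx₀X⟩ : {x // x ∈ X}) 1 := by
      funext z
      show (u z + _) + (u z + v z) = v z + _
      have key : ∀ a b c : ZMod 2, (a + c) + (a + b) = b + c := by decide
      exact key _ _ _
    rw [heq] at r3
    exact (r1.trans r3).trans r2.symm
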